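/- Let f ∈ Λ_*(ℝⁿ) (Zygmund class) and let {f_j}_{j≥0} be a Littlewood–Paley decomposition of f with ‖f_j‖_∞ ≤ A 2^{−j}, ‖∇f_j‖_∞ ≤ A, and ‖∂^α f_j‖_∞ ≤ A 2^{j(|α|−1)} for |α| ≤ 3. Then for any x, x' ∈ ℝⁿ, y > 0 and p with |p| = y: |f(x+p)−2f(x)+f(x−p) − f(x'+p)+2f(x')−f(x'−p)| ≤ C A |x−x'| log(e + y/|x−x'|). -/

import Mathlib

open scoped BigOperators
open Real Set


private lemma lip_of_fderiv {E F : Type*} [NormedAddCommGroup E] [NormedSpace ℝ E]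
    [NormedAddCommGroup F] [NormedSpace ℝ F] {f : E → F} (hf : Differentiable ℝ f)
    {M : ℝ} (hM : ∀ z, ‖fderiv ℝ f z‖ ≤ M) (a b : E) : ‖f a - f b‖ ≤ M * ‖a - b‖ :=
  (convex_univ).norm_image_sub_le_of_norm_fderiv_le (fun z _ => hf z)
    (fun z _ => hM z) (mem_univ b) (mem_univ a)

private lemma taylor1 {E : Type*} [NormedAddCommGroup E] [NormedSpace ℝ E]
    {f : E → ℝ} (hf : ContDiff ℝ 2 f) {M : ℝ}
    (hM : ∀ z, ‖iteratedFDeriv ℝ 2 f z‖ ≤ M) (x q : E) :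
    ‖f (x + q) - f x - fderiv ℝ f x q‖ ≤ M * ‖q‖ ^ 2 := by
  set g := fderiv ℝ f with hg
  have hfd : Differentiable ℝ f := hf.differentiable (by norm_num)
  have hgc : ContDiff ℝ 1 g := hf.fderiv_right (by norm_num)
  have hgd : Differentiable ℝ g := hgc.differentiable one_ne_zero
  have hM0 : 0 ≤ M := le_trans (norm_nonneg _) (hM x)
  have hgfb : ∀ z, ‖fderiv ℝ g z‖ ≤ M := by
    intro z
    have e1 : ‖fderiv ℝ g z‖ = ‖iteratedFDeriv ℝ 1 g z‖ := by
      rw [← norm_iteratedFDeriv_fderiv (n := 0), norm_iteratedFDeriv_zero]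
    rw [e1, norm_iteratedFDeriv_fderiv]
    exact hM z
  have gLip : ∀ a b : E, ‖g a - g b‖ ≤ M * ‖a - b‖ := lip_of_fderiv hgd hgfb
  set h : E → ℝ := fun z => f z - g x z with hh
  have hdz : ∀ z, DifferentiableAt ℝ h z := fun z =>
    (hfd z).sub ((g x).differentiable z)
  have hfderiv : ∀ z, fderiv ℝ h z = fderiv ℝ f z - g x := by
    intro z
    rw [hh]
    rw [fderiv_fun_sub (hfd z) ((g x).differentiable z)]
    rw [(g x).fderiv]
  have hseg : ∀ z ∈ segment ℝ x (x + q), ‖fderiv ℝ h z‖ ≤ M * ‖q‖ := by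
    intro z hz
    rw [segment_eq_image'] at hz
    obtain ⟨t, ht, rfl⟩ := hz
    rw [hfderiv]
    have : ‖g (x + t • (x + q - x)) - g x‖ ≤ M * ‖t • (x + q - x)‖ := by
      have := gLip (x + t • (x + q - x)) x
      simpa using this
    refine le_trans this ?_
    have : ‖t • (x + q - x)‖ ≤ ‖q‖ := by
      rw [norm_smul]
      simp only [add_sub_cancel_left]
      calc ‖t‖ * ‖q‖ ≤ 1 * ‖q‖ := by
            apply mul_le_mul_of_nonneg_right _ (norm_nonneg _)
            rw [Real.norm_eq_abs, abs_le]
            exact ⟨by linarith [ht.1], ht.2⟩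
        _ = ‖q‖ := one_mul _
    exact mul_le_mul_of_nonneg_left this hM0
  have key := (convex_segment x (x + q)).norm_image_sub_le_of_norm_fderiv_le
    (fun z _ => hdz z) hseg (left_mem_segment ℝ x (x + q)) (right_mem_segment ℝ x (x + q))
  have e2 : h (x + q) - h x = f (x + q) - f x - fderiv ℝ f x q := by
    simp only [hh, ← hg, map_add]
    ring
  rw [e2] at key
  have e3 : ‖x + q - x‖ = ‖q‖ := by rw [add_sub_cancel_left]
  rw [e3] at key
  calc ‖f (x + q) - f x - fderiv ℝ f x q‖ ≤ M * ‖q‖ * ‖q‖ := key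
    _ = M * ‖q‖ ^ 2 := by ring

private lemma second_diff_bound {E : Type*} [NormedAddCommGroup E] [NormedSpace ℝ E]
    {f : E → ℝ} (hf : ContDiff ℝ 2 f) {M : ℝ}
    (hM : ∀ z, ‖iteratedFDeriv ℝ 2 f z‖ ≤ M) (x p : E) :
    |f (x + p) - 2 * f x + f (x - p)| ≤ 2 * M * ‖p‖ ^ 2 := by
  have h1 := taylor1 hf hM x p
  have h2 := taylor1 hf hM x (-p)
  rw [← sub_eq_add_neg, map_neg, norm_neg] at h2
  have e : f (x + p) - 2 * f x + f (x - p) =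
      (f (x + p) - f x - fderiv ℝ f x p) + (f (x - p) - f x - -(fderiv ℝ f x p)) := by ring
  rw [e]
  rw [Real.norm_eq_abs] at h1 h2
  calc |(f (x + p) - f x - fderiv ℝ f x p) + (f (x - p) - f x - -(fderiv ℝ f x p))| ≤
      |f (x + p) - f x - fderiv ℝ f x p| + |f (x - p) - f x - -(fderiv ℝ f x p)| := abs_add_le _ _
    _ ≤ M * ‖p‖ ^ 2 + M * ‖p‖ ^ 2 := add_le_add h1 h2
    _ = 2 * M * ‖p‖ ^ 2 := by ring


/-- Let `f ∈ Λ_*(ℝⁿ)` with Littlewood–Paley decomposition `f = Σ_j f_j`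
satisfying `‖f_j‖_∞ ≤ A 2^{−j}`, `‖∇f_j‖_∞ ≤ A` and `‖∂^α f_j‖_∞ ≤ A 2^{j(|α|−1)}` for
`|α| ≤ 3`. Then for all `x, x'`, `y > 0`, and `p` with `‖p‖ = y`:
`|f(x+p)−2f(x)+f(x−p) − f(x'+p)+2f(x')−f(x'−p)| ≤ C A |x−x'| log(e + y/|x−x'|)`. -/
theorem second_difference_variation_LP (n : ℕ) :
    ∃ C > 0, ∀ (f : EuclideanSpace ℝ (Fin n) → ℝ)
      (fj : ℕ → EuclideanSpace ℝ (Fin n) → ℝ) (A : ℝ),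
      (∀ x, HasSum (fun j => fj j x) (f x)) →
      (∀ j, ContDiff ℝ 3 (fj j)) →
      (∀ j x, |fj j x| ≤ A * 2 ^ (-(j : ℝ))) →
      (∀ j x, ‖iteratedFDeriv ℝ 1 (fj j) x‖ ≤ A) →
      (∀ (m : ℕ) (j : ℕ) (x), m ≤ 3 →
        ‖iteratedFDeriv ℝ m (fj j) x‖ ≤ A * 2 ^ ((j : ℝ) * ((m : ℝ) - 1))) →
      ∀ (x x' p : EuclideanSpace ℝ (Fin n)) (y : ℝ), 0 < y → ‖p‖ = y →
        |f (x + p) - 2 * f x + f (x - p) - f (x' + p) + 2 * f x' - f (x' - p)| ≤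
          C * A * (‖x - x'‖ * Real.log (Real.exp 1 + y / ‖x - x'‖)) := by
  refine ⟨64, by norm_num, ?_⟩
  intro f fj A hsum hsm h0 h1 hm x x' p y hy hp
  have hA : 0 ≤ A := by
    have h' : |fj 0 x| ≤ A := by simpa using h0 0 x
    exact le_trans (abs_nonneg _) h'
  have hpow : ∀ j : ℕ, (2:ℝ) ^ (-(j:ℝ)) = (1/2:ℝ) ^ j := by
    intro j
    rw [Real.rpow_neg (by norm_num), Real.rpow_natCast]
    simp [one_div, inv_pow]
  -- dispose of the case x = x'
  rcases eq_or_ne x x' with rfl | hne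
  · have e0 : f (x + p) - 2 * f x + f (x - p) - f (x + p) + 2 * f x - f (x - p) = 0 := by ring
    rw [e0]
    simp
  set d := ‖x - x'‖ with hd
  have hdpos : 0 < d := by
    rw [hd, norm_pos_iff, sub_ne_zero]; exact hne
  set s : ℕ → ℝ := fun j => fj j (x + p) - 2 * fj j x + fj j (x - p) - fj j (x' + p)
      + 2 * fj j x' - fj j (x' - p) with hs
  have hS : HasSum s (f (x + p) - 2 * f x + f (x - p) - f (x' + p) + 2 * f x' - f (x' - p)) :=
    (((((hsum (x + p)).sub ((hsum x).mul_left 2)).add (hsum (x - p))).sub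
      (hsum (x' + p))).add ((hsum x').mul_left 2)).sub (hsum (x' - p))
  -- three bounds on |s j|
  have hb0 : ∀ j, |s j| ≤ 8 * (A * 2 ^ (-(j:ℝ))) := by
    intro j
    obtain ⟨l1, r1⟩ := abs_le.mp (h0 j (x + p))
    obtain ⟨l2, r2⟩ := abs_le.mp (h0 j x)
    obtain ⟨l3, r3⟩ := abs_le.mp (h0 j (x - p))
    obtain ⟨l4, r4⟩ := abs_le.mp (h0 j (x' + p))
    obtain ⟨l5, r5⟩ := abs_le.mp (h0 j x')
    obtain ⟨l6, r6⟩ := abs_le.mp (h0 j (x' - p))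
    rw [abs_le]
    constructor <;> simp only [hs] <;> linarith
  have hlip : ∀ j (a b : EuclideanSpace ℝ (Fin n)), |fj j a - fj j b| ≤ A * ‖a - b‖ := by
    intro j a b
    have hdiff : Differentiable ℝ (fj j) := (hsm j).differentiable (by norm_num)
    have hfd : ∀ z, ‖fderiv ℝ (fj j) z‖ ≤ A := by
      intro z
      have e1 : ‖fderiv ℝ (fj j) z‖ = ‖iteratedFDeriv ℝ 1 (fj j) z‖ := by
        rw [← norm_iteratedFDeriv_fderiv (n := 0), norm_iteratedFDeriv_zero]
      rw [e1]; exact h1 j z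
    simpa using lip_of_fderiv hdiff hfd a b
  have hb1 : ∀ j, |s j| ≤ 4 * (A * d) := by
    intro j
    have e1 : x + p - (x' + p) = x - x' := by abel
    have e2 : x - p - (x' - p) = x - x' := by abel
    have t1 := hlip j (x + p) (x' + p); rw [e1, ← hd] at t1
    have t2 := hlip j x x'; rw [← hd] at t2
    have t3 := hlip j (x - p) (x' - p); rw [e2, ← hd] at t3
    obtain ⟨l1, r1⟩ := abs_le.mp t1
    obtain ⟨l2, r2⟩ := abs_le.mp t2
    obtain ⟨l3, r3⟩ := abs_le.mp t3
    rw [abs_le]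
    constructor <;> simp only [hs] <;> linarith
  have hb2 : ∀ j, |s j| ≤ 4 * (A * 2 ^ (j:ℝ) * y ^ 2) := by
    intro j
    have hM : ∀ z, ‖iteratedFDeriv ℝ 2 (fj j) z‖ ≤ A * 2 ^ (j:ℝ) := by
      intro z
      have e : (j:ℝ) * (((2:ℕ):ℝ) - 1) = (j:ℝ) := by push_cast; ring
      have := hm 2 j z (by norm_num)
      rwa [e] at this
    have h2 : ContDiff ℝ 2 (fj j) := (hsm j).of_le (by norm_num)
    have q1 := second_diff_bound h2 hM x p
    have q2 := second_diff_bound h2 hM x' p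
    rw [hp] at q1 q2
    obtain ⟨l1, r1⟩ := abs_le.mp q1
    obtain ⟨l2, r2⟩ := abs_le.mp q2
    rw [abs_le]
    constructor <;> simp only [hs] <;> linarith
  -- the dominating sequence
  set b : ℕ → ℝ := fun j =>
    min (8 * (A * 2 ^ (-(j:ℝ)))) (min (4 * (A * d)) (4 * (A * 2 ^ (j:ℝ) * y ^ 2))) with hb
  have hbb : ∀ j, |s j| ≤ b j := fun j => le_min (hb0 j) (le_min (hb1 j) (hb2 j))
  have hbnn : ∀ j, 0 ≤ b j := fun j => le_trans (abs_nonneg _) (hbb j)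
  have hble : ∀ j, b j ≤ 8 * (A * (1/2:ℝ) ^ j) := by
    intro j
    refine le_trans (min_le_left _ _) (le_of_eq ?_)
    rw [hpow j]
  have hgeo : Summable (fun j : ℕ => 8 * (A * (1/2:ℝ) ^ j)) :=
    ((summable_geometric_of_lt_one (by norm_num) (by norm_num)).mul_left A).mul_left 8
  have hbsum : Summable b := Summable.of_nonneg_of_le hbnn hble hgeo
  have hssum : Summable (fun j => |s j|) :=
    Summable.of_nonneg_of_le (fun j => abs_nonneg _) hbb hbsum
  have key : |f (x + p) - 2 * f x + f (x - p) - f (x' + p) + 2 * f x' - f (x' - p)|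
      ≤ ∑' j, b j := by
    rw [← hS.tsum_eq, ← Real.norm_eq_abs]
    refine le_trans (norm_tsum_le_tsum_norm (by simpa [Real.norm_eq_abs] using hssum)) ?_
    simp only [Real.norm_eq_abs]
    exact Summable.tsum_le_tsum hbb hssum hbsum
  -- the general cutoff bound
  have main : ∀ L' K : ℕ, L' ≤ K → (∑' j, b j) ≤
      4 * (A * y ^ 2) * ((2:ℝ) ^ L' - 1) + ((K - L' : ℕ):ℝ) * (4 * (A * d))
        + 16 * A * (1/2:ℝ) ^ K := by
    intro L' K hLK
    have hsplit := Summable.sum_add_tsum_nat_add K hbsum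
    -- tail
    have htail : (∑' j, b (j + K)) ≤ 16 * A * (1/2:ℝ) ^ K := by
      have hsum1 : Summable (fun j : ℕ => b (j + K)) := (summable_nat_add_iff K).mpr hbsum
      have hsum2 : Summable (fun j : ℕ => 8 * A * (1/2:ℝ) ^ K * (1/2:ℝ) ^ j) :=
        (summable_geometric_of_lt_one (by norm_num) (by norm_num)).mul_left _
      have step : ∀ j : ℕ, b (j + K) ≤ 8 * A * (1/2:ℝ) ^ K * (1/2:ℝ) ^ j := by
        intro j
        refine le_trans (hble (j + K)) (le_of_eq ?_)
        rw [pow_add]; ring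
      refine le_trans (Summable.tsum_le_tsum step hsum1 hsum2) (le_of_eq ?_)
      rw [tsum_mul_left, tsum_geometric_of_lt_one (by norm_num) (by norm_num)]
      norm_num
      ring
    -- head
    have hhead : (∑ j ∈ Finset.range K, b j) ≤
        4 * (A * y ^ 2) * ((2:ℝ) ^ L' - 1) + ((K - L' : ℕ):ℝ) * (4 * (A * d)) := by
      rw [Finset.range_eq_Ico, ← Finset.sum_Ico_consecutive _ (Nat.zero_le L') hLK]
      have hpart1 : (∑ j ∈ Finset.Ico 0 L', b j) ≤ 4 * (A * y ^ 2) * ((2:ℝ) ^ L' - 1) := by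
        have step : ∀ j ∈ Finset.Ico 0 L', b j ≤ 4 * (A * y ^ 2) * (2:ℝ) ^ j := by
          intro j _
          refine le_trans (min_le_right _ _) (le_trans (min_le_right _ _) (le_of_eq ?_))
          rw [Real.rpow_natCast]; ring
        refine le_trans (Finset.sum_le_sum step) (le_of_eq ?_)
        rw [← Finset.mul_sum, ← Finset.range_eq_Ico, geom_sum_eq (by norm_num : (2:ℝ) ≠ 1)]
        norm_num
      have hpart2 : (∑ j ∈ Finset.Ico L' K, b j) ≤ ((K - L' : ℕ):ℝ) * (4 * (A * d)) := by
        have := Finset.sum_le_card_nsmul (Finset.Ico L' K) b (4 * (A * d))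
          (fun j _ => le_trans (min_le_right _ _) (min_le_left _ _))
        rw [Nat.card_Ico, nsmul_eq_mul] at this
        exact this
      linarith
    linarith [hsplit.ge, hsplit.le, htail, hhead]
  -- choose cutoffs
  set LG := Real.log (Real.exp 1 + y / d) with hLG
  have hLG1 : 1 ≤ LG := by
    rw [hLG]
    have h1 : Real.exp 1 ≤ Real.exp 1 + y / d := le_add_of_nonneg_right (by positivity)
    calc (1:ℝ) = Real.log (Real.exp 1) := (Real.log_exp 1).symm
      _ ≤ _ := Real.log_le_log (Real.exp_pos 1) h1
  rcases le_or_gt (1/2 : ℝ) d with hdge | hdlt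
  · -- trivial case : d ≥ 1/2
    have hbound := main 0 0 le_rfl
    norm_num at hbound
    have hfin : 16 * A ≤ 64 * A * (d * LG) := by
      have hh : (1/2 : ℝ) * 1 ≤ d * LG := mul_le_mul hdge hLG1 one_pos.le (by linarith)
      linarith [mul_nonneg hA (by linarith : (0:ℝ) ≤ d * LG - 1/2)]
    linarith [key, hbound, hfin]
  · -- main case : d < 1/2
    set K := ⌊Real.logb 2 (1/d)⌋₊ + 1 with hK
    set L := ⌊Real.logb 2 (d / y^2)⌋₊ with hL
    set L' := min L K with hL'
    have hLK : L' ≤ K := min_le_right _ _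
    have h1d : 1 < 1/d := by rw [lt_div_iff₀ hdpos]; linarith
    have hlogb1d : 0 ≤ Real.logb 2 (1/d) := Real.logb_nonneg one_lt_two h1d.le
    have hKub : (K:ℝ) ≤ Real.logb 2 (1/d) + 1 := by
      rw [hK]; push_cast
      have := Nat.floor_le hlogb1d
      linarith
    have hKd : (1/2:ℝ)^K ≤ d := by
      have hlt : Real.logb 2 (1/d) < (K:ℝ) := by
        rw [hK]; push_cast; exact Nat.lt_floor_add_one _
      have h2K : 1/d < (2:ℝ)^(K:ℕ) := by
        calc 1/d = (2:ℝ) ^ Real.logb 2 (1/d) :=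
              (Real.rpow_logb (by norm_num) (by norm_num) (by positivity)).symm
          _ < (2:ℝ)^((K:ℕ):ℝ) := (Real.rpow_lt_rpow_left_iff one_lt_two).mpr hlt
          _ = (2:ℝ)^(K:ℕ) := Real.rpow_natCast 2 K
      rw [div_pow, one_pow, div_le_iff₀ (by positivity)]
      rw [div_lt_iff₀ hdpos, mul_comm] at h2K
      linarith
    have hfirst : 4 * (A * y^2) * ((2:ℝ)^L' - 1) ≤ 4 * (A * d) := by
      rcases Nat.eq_zero_or_pos L' with h | h
      · rw [h, pow_zero]
        have e : 4 * (A * y^2) * ((1:ℝ) - 1) = 0 := by ring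
        rw [e]
        positivity
      · have hLpos : 0 < L := lt_of_lt_of_le h (min_le_left _ _)
        have h1le : 1 ≤ Real.logb 2 (d / y^2) := Nat.floor_pos.mp hLpos
        have hdy : (0:ℝ) < d / y^2 := by positivity
        have hLle : (L:ℝ) ≤ Real.logb 2 (d / y^2) := Nat.floor_le (by linarith)
        have h2L : (2:ℝ)^L' ≤ d / y^2 := by
          have hc : ((L':ℕ):ℝ) ≤ Real.logb 2 (d / y^2) := by
            have h' : ((L':ℕ):ℝ) ≤ (L:ℝ) := by exact_mod_cast min_le_left L K
            linarith
          calc (2:ℝ)^L' = (2:ℝ)^((L':ℕ):ℝ) := (Real.rpow_natCast 2 L').symm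
            _ ≤ (2:ℝ)^(Real.logb 2 (d/y^2)) := (Real.rpow_le_rpow_left_iff one_lt_two).mpr hc
            _ = d / y^2 := Real.rpow_logb (by norm_num) (by norm_num) hdy
        have hy2 : y^2 * (2:ℝ)^L' ≤ d := by
          rw [← le_div_iff₀' (by positivity : (0:ℝ) < y^2)]
          exact h2L
        have hkey : y^2 * ((2:ℝ)^L' - 1) ≤ d := by linarith [hy2, sq_nonneg y]
        linarith [mul_nonneg hA (sub_nonneg.mpr hkey)]
    have hmid : ((K - L' : ℕ):ℝ) ≤ 6 * LG := by
      rcases le_or_gt K L with hKL | hLK2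
      · have e : L' = K := by rw [hL']; exact min_eq_right hKL
        rw [e, Nat.sub_self, Nat.cast_zero]
        linarith
      · have hL'L : L' = L := by rw [hL']; exact min_eq_left hLK2.le
        rw [hL'L, Nat.cast_sub hLK2.le]
        have hLlb : Real.logb 2 (d / y^2) - 1 < (L:ℝ) := by
          have h' := Nat.lt_floor_add_one (Real.logb 2 (d / y^2))
          rw [hL]; push_cast; linarith
        have hlog2 : (1/2:ℝ) < Real.log 2 := by
          have := Real.log_two_gt_d9; norm_num at this ⊢; linarith
        have hident : Real.logb 2 (1/d) - Real.logb 2 (d/y^2) = 2 * Real.logb 2 (y/d) := by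
          have e : Real.log (1/d) - Real.log (d/y^2) = 2 * Real.log (y/d) := by
            rw [Real.log_div one_ne_zero hdpos.ne', Real.log_div hdpos.ne' (by positivity),
                Real.log_div hy.ne' hdpos.ne', Real.log_pow, Real.log_one]
            push_cast; ring
          simp only [Real.logb]
          rw [div_sub_div_same, e]
          ring
        have hz : Real.log (y/d) ≤ LG := by
          rw [hLG]
          exact Real.log_le_log (by positivity) (le_add_of_nonneg_left (Real.exp_pos 1).le)
        have hzb : Real.logb 2 (y/d) ≤ 2 * LG := by
          rw [Real.logb, div_le_iff₀ (by linarith)]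
          linarith [hz, mul_nonneg (by linarith : (0:ℝ) ≤ LG)
            (by linarith : (0:ℝ) ≤ 2 * Real.log 2 - 1)]
        linarith [hKub, hLlb, hident, hzb, hLG1]
    have hbound := main L' K hLK
    have hmid' : ((K - L' : ℕ):ℝ) * (4 * (A * d)) ≤ 6 * LG * (4 * (A * d)) :=
      mul_le_mul_of_nonneg_right hmid (by positivity)
    have htail' : 16 * A * (1/2:ℝ)^K ≤ 16 * A * d :=
      mul_le_mul_of_nonneg_left hKd (by positivity)
    have final : (∑' j, b j) ≤ 64 * A * (d * LG) := by
      linarith [hbound, hfirst, hmid', htail',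
        mul_nonneg (mul_nonneg hA hdpos.le) (by linarith : (0:ℝ) ≤ LG - 1),
        mul_nonneg hA hdpos.le]
    linarith [key, final]
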